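/- Assume (F2) and that c ∈ ℝ. Then there exists a set Ā ∈ F which is optimal for J at c, i.e. sup_{x ∈ Ā} J(x) = c. -/
import Mathlib


open Filter Topology

/-- Kuratowski limit superior of a sequence of subsets of a metric space:
the set of points `x` for which there are `n_k → ∞` and `x_{n_k} ∈ A_{n_k}`
with `x_{n_k} → x`. -/
def SeqLimsup {X : Type*} [MetricSpace X] (A : ℕ → Set X) : Set X :=
  {x | ∃ φ : ℕ → ℕ, StrictMono φ ∧
    ∃ y : ℕ → X, (∀ n, y n ∈ A (φ n)) ∧ Tendsto y atTop (𝓝 x)}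

/-- Assume (F2) and that the minimax level `c` is real. Then there exists a set
`Ā ∈ F` which is optimal for `J` at `c`, i.e. `sup_{x ∈ Ā} J(x) = c`. -/
theorem optimal_set_exists {X : Type*} [MetricSpace X]
    (F : Set (Set X)) (J : X → EReal) (hJ : LowerSemicontinuous J)
    (c : ℝ) (hc : (⨅ A ∈ F, ⨆ x ∈ A, J x) = (c : EReal))
    (hF2 : ∃ c' : EReal, (c : EReal) < c' ∧
      ∀ A : ℕ → Set X, (∀ n, A n ∈ F) → (∀ n, ∀ x ∈ A n, J x ≤ c') →
        SeqLimsup A ∈ F) :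
    ∃ A ∈ F, (⨆ x ∈ A, J x) = (c : EReal) := by
  obtain ⟨c', hcc', hF2⟩ := hF2
  set b : ℕ → EReal := fun n => min c' ((c + 1 / (n + 1) : ℝ) : EReal) with hb
  have hbgt : ∀ n, (c : EReal) < b n := by
    intro n
    refine lt_min hcc' ?_
    have h0 : (0:ℝ) < 1 / (n + 1) := by positivity
    have : c < c + 1 / (n + 1 : ℝ) := by linarith
    exact_mod_cast this
  have hbub : ∀ n, b n ≤ ((c + 1 / (n + 1) : ℝ) : EReal) := fun n => min_le_right _ _
  have hbc' : ∀ n, b n ≤ c' := fun n => min_le_left _ _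
  have hex : ∀ n, ∃ A ∈ F, (⨆ x ∈ A, J x) < b n := by
    intro n
    have : (⨅ A ∈ F, ⨆ x ∈ A, J x) < b n := by rw [hc]; exact hbgt n
    simpa [iInf_lt_iff] using this
  choose A hAF hAb using hex
  have hA' : ∀ n, ∀ x ∈ A n, J x ≤ c' := by
    intro n x hx
    exact le_trans (le_trans (le_iSup₂ (f := fun x _ => J x) x hx) (hAb n).le) (hbc' n)
  refine ⟨SeqLimsup A, hF2 A hAF hA', le_antisymm ?_ ?_⟩
  · refine iSup₂_le fun x hx => ?_
    obtain ⟨φ, hφ, y, hy, hty⟩ := hx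
    by_contra h
    push_neg at h
    obtain ⟨r, hcr, hrJ⟩ := EReal.exists_between_coe_real h
    have hev1 : ∀ᶠ k in atTop, (r : EReal) < J (y k) :=
      hty.eventually (hJ x r hrJ)
    have hcr' : (c : ℝ) < r := by exact_mod_cast hcr
    obtain ⟨N, hN⟩ := exists_nat_one_div_lt (by linarith : (0:ℝ) < r - c)
    have hev2 : ∀ᶠ k in atTop, J (y k) ≤ (r : EReal) := by
      filter_upwards [eventually_ge_atTop N] with k hk
      have h1 : J (y k) ≤ b (φ k) :=
        le_trans (le_iSup₂ (f := fun x _ => J x) (y k) (hy k)) (hAb (φ k)).le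
      have h2 : (1 : ℝ) / (φ k + 1) ≤ 1 / (k + 1) := by
        apply one_div_le_one_div_of_le (by positivity)
        have : (k:ℝ) ≤ φ k := Nat.cast_le.2 hφ.le_apply
        linarith
      have h3 : (1 : ℝ) / (k + 1) ≤ 1 / (N + 1) := by
        apply one_div_le_one_div_of_le (by positivity)
        have : (N:ℝ) ≤ k := Nat.cast_le.2 hk
        linarith
      have h4 : c + 1 / (φ k + 1 : ℝ) ≤ r := by
        have := hN.le
        linarith [h2, h3]
      calc J (y k) ≤ b (φ k) := h1
        _ ≤ ((c + 1 / (φ k + 1) : ℝ) : EReal) := hbub (φ k)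
        _ ≤ (r : EReal) := by exact_mod_cast h4
    obtain ⟨k, hk1, hk2⟩ := (hev1.and hev2).exists
    exact absurd (hk1.trans_le hk2) (lt_irrefl _)
  · rw [← hc]
    exact iInf₂_le _ (hF2 A hAF hA')
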